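/- Let I be a finite type with a distinguished element e and an involution j ↦ j∨ on I fixing e. Let S be a symmetric I-by-I matrix over ℂ, set dim j := S e j, and assume dim j ≠ 0 for all j and dim e = 1. Suppose the fusion coefficients N : I → I → I → ℂ satisfy the Verlinde formula S i k * S j k = dim k * ∑_p N i j p * S p k for all i, j, k, and that N i j e = 1 if j = i∨ and N i j e = 0 otherwise. If there exists a vector d̂ : I → ℂ with ∑_j d̂ j * S j i = (1 if i = e else 0) for all i, then S * Y * S = C, where Y is the diagonal matrix with diagonal entries Y j j = d̂ j / dim j and C is the conjugation matrix C i j = (1 if j = i∨ else 0). -/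
import Mathlib


open Matrix BigOperators

/-- Equation (sysc): `S * Y * S = C`, where `Y = diag(d̂ j / dim j)` and `C` is the
conjugation matrix of the involution `j ↦ j∨`. -/
theorem stmt_0 {I : Type*} [Fintype I] [DecidableEq I]
    (e : I) (v : I → I) (hv : Function.Involutive v) (hve : v e = e)
    (S : Matrix I I ℂ) (hS : S.IsSymm)
    (hdim : ∀ j, S e j ≠ 0) (hde : S e e = 1)
    (N : I → I → I → ℂ)
    (hVer : ∀ i j k, S i k * S j k = S e k * ∑ p, N i j p * S p k)
    (hNe : ∀ i j, N i j e = if j = v i then 1 else 0)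
    (dhat : I → ℂ)
    (hd : ∀ i, ∑ j, dhat j * S j i = if i = e then 1 else 0) :
    S * Matrix.diagonal (fun j => dhat j / S e j) * S
      = Matrix.of (fun i j => if j = v i then (1 : ℂ) else 0) := by
  have hsym : ∀ a b, S a b = S b a := fun a b => hS.apply b a
  ext i j
  rw [Matrix.mul_apply]
  simp only [Matrix.mul_diagonal, Matrix.of_apply]
  calc ∑ k, S i k * (dhat k / S e k) * S k j
      = ∑ k, dhat k * ∑ p, N i j p * S p k := by
        refine Finset.sum_congr rfl fun k _ => ?_
        have h1 : S i k * (dhat k / S e k) * S k j = dhat k / S e k * (S i k * S j k) := by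
          rw [hsym k j]; ring
        rw [h1, hVer, ← mul_assoc, div_mul_cancel₀ _ (hdim k)]
    _ = ∑ p, N i j p * ∑ k, dhat k * S k p := by
        simp_rw [Finset.mul_sum]
        rw [Finset.sum_comm]
        exact Finset.sum_congr rfl fun p _ => Finset.sum_congr rfl fun k _ => by rw [hsym p k]; ring
    _ = (if j = v i then 1 else 0) := by
        simp_rw [hd]
        rw [Finset.sum_eq_single e]
        · rw [hNe]; simp
        · intro b _ hb; simp [hb]
        · simp
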